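/- Let n be a natural number and let x, y be vectors in Euclidean space ℝⁿ with 1 ≤ ‖x‖ and ‖x‖ ≤ ‖y‖ (Euclidean norm). Then ‖ x/‖x‖ − y/‖y‖ ‖ ≤ ‖x − y‖ / ‖x‖. -/

import Mathlib

/-- Sharpened inequality established inside the proof of the Projection Lemma. -/
theorem projection_lemma_sharp (n : ℕ) (x y : EuclideanSpace ℝ (Fin n))
    (hx : 1 ≤ ‖x‖) (hxy : ‖x‖ ≤ ‖y‖) :
    ‖‖x‖⁻¹ • x - ‖y‖⁻¹ • y‖ ≤ ‖x - y‖ / ‖x‖ := by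
  have ha : (0:ℝ) < ‖x‖ := lt_of_lt_of_le one_pos hx
  have hb : (0:ℝ) < ‖y‖ := lt_of_lt_of_le ha hxy
  have hip : |(inner ℝ x y : ℝ)| ≤ ‖x‖ * ‖y‖ := abs_real_inner_le_norm x y
  have h1 : ‖‖x‖⁻¹ • x - ‖y‖⁻¹ • y‖^2
      = 2 - 2 * (inner ℝ x y : ℝ) / (‖x‖ * ‖y‖) := by
    rw [@norm_sub_sq_real, real_inner_smul_left, real_inner_smul_right,
      norm_smul, norm_smul, norm_inv, norm_norm, norm_inv, norm_norm]
    rw [inv_mul_cancel₀ ha.ne', inv_mul_cancel₀ hb.ne']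
    field_simp
    ring
  have h2 : ‖x - y‖^2 = ‖x‖^2 - 2 * (inner ℝ x y : ℝ) + ‖y‖^2 := by
    rw [@norm_sub_sq_real]
  have hsq : ‖‖x‖⁻¹ • x - ‖y‖⁻¹ • y‖^2 ≤ (‖x - y‖ / ‖x‖)^2 := by
    rw [h1, div_pow, h2]
    have hrw : 2 - 2 * (inner ℝ x y : ℝ) / (‖x‖ * ‖y‖)
        = (2 * (‖x‖ * ‖y‖) - 2 * (inner ℝ x y : ℝ)) / (‖x‖ * ‖y‖) := by
      field_simp
    rw [hrw, div_le_div_iff₀ (by positivity) (by positivity)]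
    have habs := abs_le.mp hip
    have key : (0:ℝ) ≤ (‖y‖ - ‖x‖) * (‖y‖ * (‖x‖ + ‖y‖) - 2 * (inner ℝ x y : ℝ)) :=
      mul_nonneg (by linarith) (by nlinarith [habs.2, mul_pos ha hb])
    nlinarith [mul_nonneg ha.le key]
  have hnn : (0:ℝ) ≤ ‖x - y‖ / ‖x‖ := by positivity
  nlinarith [norm_nonneg (‖x‖⁻¹ • x - ‖y‖⁻¹ • y), hnn, hsq]
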